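/- Let k ≥ 1 and let P be the path graph obtained from two vertex-disjoint paths P_1 and P_2, each with exactly k edges, by adding a new edge x_1x_2, where x_i is an endpoint of P_i for i = 1, 2. For i = 1, 2 let D_i be an orientation of P_i in which every vertex has out-degree at most 1 and whose unique vertex of out-degree 0 lies at distance at least k/2 from x_i along P_i. Then every orientation of P in which every vertex has out-degree at most 1 orients at least k/2 of the edges of P_1 and P_2 differently from D_1 and D_2. -/

import Mathlib

namespace Stmt15

open SimpleGraph Finset

variable {V : Type*}

lemma getVert_mem_support {G : SimpleGraph V} {u v : V} (p : G.Walk u v) (i : ℕ)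
    (hi : i ≤ p.length) : p.getVert i ∈ p.support :=
  SimpleGraph.Walk.mem_support_iff_exists_getVert.2 ⟨i, rfl, hi⟩

lemma getVert_transfer {G : SimpleGraph V} {u v : V} (p : G.Walk u v) (H : SimpleGraph V)
    (hp : ∀ e ∈ p.edges, e ∈ H.edgeSet) (i : ℕ) :
    (p.transfer H hp).getVert i = p.getVert i := by
  induction p generalizing i with
  | nil => rfl
  | cons h q ih =>
    cases i with
    | zero => simp [SimpleGraph.Walk.transfer]
    | succ n => simp [SimpleGraph.Walk.transfer, SimpleGraph.Walk.getVert_cons_succ, ih]; exact ih _ n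

lemma getVert_inj {G : SimpleGraph V} {u v : V} (p : G.Walk u v) :
    p.IsPath → ∀ i j, i ≤ p.length → j ≤ p.length → p.getVert i = p.getVert j → i = j := by
  induction p with
  | nil => intro _ i j hi hj _; simp [SimpleGraph.Walk.length_nil] at hi hj; omega
  | cons hadj q ih =>
    intro hp i j hi hj h
    rw [SimpleGraph.Walk.cons_isPath_iff] at hp
    rw [SimpleGraph.Walk.length_cons] at hi hj
    rcases i with _ | i <;> rcases j with _ | j
    · rfl
    · exfalso
      rw [SimpleGraph.Walk.getVert_zero, SimpleGraph.Walk.getVert_cons_succ] at h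
      exact hp.2 (SimpleGraph.Walk.mem_support_iff_exists_getVert.2 ⟨j, h.symm, by omega⟩)
    · exfalso
      rw [SimpleGraph.Walk.getVert_zero, SimpleGraph.Walk.getVert_cons_succ] at h
      exact hp.2 (SimpleGraph.Walk.mem_support_iff_exists_getVert.2 ⟨i, h, by omega⟩)
    · rw [SimpleGraph.Walk.getVert_cons_succ, SimpleGraph.Walk.getVert_cons_succ] at h
      have := ih hp.1 i j (by omega) (by omega) h
      omega

lemma mem_edges_getVert {G : SimpleGraph V} {x y : V} {u v : V} (p : G.Walk u v)
    (h : s(x, y) ∈ p.edges) :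
    ∃ i, i < p.length ∧ ((p.getVert i = x ∧ p.getVert (i + 1) = y) ∨
      (p.getVert i = y ∧ p.getVert (i + 1) = x)) := by
  induction p with
  | nil => simp at h
  | cons hadj q ih =>
    rw [SimpleGraph.Walk.edges_cons, List.mem_cons] at h
    rcases h with h | h
    · refine ⟨0, by simp [SimpleGraph.Walk.length_cons], ?_⟩
      simp only [SimpleGraph.Walk.getVert_zero, SimpleGraph.Walk.getVert_cons_succ]
      rcases Sym2.eq_iff.1 h with ⟨h1, h2⟩ | ⟨h1, h2⟩
      · exact Or.inl ⟨h1.symm, h2.symm⟩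
      · exact Or.inr ⟨h2.symm, h1.symm⟩
    · obtain ⟨i, hi, hc⟩ := ih h
      exact ⟨i + 1, by simp [SimpleGraph.Walk.length_cons]; omega,
        by simpa [SimpleGraph.Walk.getVert_cons_succ] using hc⟩

lemma orient_card [Fintype V] [DecidableEq V] (E : Finset (Sym2 V)) (o : V → V → Bool)
    (ha : ∀ x y, o x y = true → s(x, y) ∈ E)
    (hb : ∀ x y, s(x, y) ∈ E → (o x y = true ↔ o y x = false))
    (hdeg : ∀ x y y', o x y = true → o x y' = true → y = y') :
    (Finset.univ.filter (fun v => ∃ w, o v w = true)).card = E.card := by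
  classical
  set f : V → V := fun v => if h : ∃ w, o v w = true then h.choose else v with hf
  have hof : ∀ v : V, (∃ w, o v w = true) → o v (f v) = true := by
    intro v h
    simp only [hf]
    rw [dif_pos h]
    exact h.choose_spec
  apply Finset.card_bij (fun v _ => s(v, f v))
  · intro v hv
    rw [Finset.mem_filter] at hv
    exact ha _ _ (hof v hv.2)
  · intro u hu v hv h
    rw [Finset.mem_filter] at hu hv
    have hu' := hof u hu.2
    have hv' := hof v hv.2
    rw [Sym2.eq_iff] at h
    rcases h with ⟨h1, _⟩ | ⟨h1, h2⟩
    · exact h1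
    · exfalso
      subst h1
      rw [h2] at hu'
      have := (hb v (f v) (ha _ _ hv')).1 hv'
      rw [this] at hu'
      exact Bool.noConfusion hu'
  · intro e he
    induction e using Sym2.inductionOn with
    | hf x y =>
      cases hxy : o x y with
      | false =>
        have hyx : o y x = true := by
          cases h2 : o y x with
          | true => rfl
          | false =>
            have h3 := (hb x y he).2 h2
            rw [hxy] at h3
            exact Bool.noConfusion h3
        refine ⟨y, ?_, ?_⟩
        · rw [Finset.mem_filter]; exact ⟨Finset.mem_univ _, ⟨x, hyx⟩⟩
        · have hfy : f y = x := hdeg y (f y) x (hof y ⟨x, hyx⟩) hyx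
          rw [hfy, Sym2.eq_swap]
      | true =>
        refine ⟨x, ?_, ?_⟩
        · rw [Finset.mem_filter]; exact ⟨Finset.mem_univ _, ⟨y, hxy⟩⟩
        · have hfx : f x = y := hdeg x (f x) y (hof x ⟨y, hxy⟩) hxy
          rw [hfx]

lemma aux [Fintype V] [DecidableEq V] (k : ℕ) (hk : 1 ≤ k) (P : SimpleGraph V)
    (S : Set V) (Ea : Set (Sym2 V)) (hEa : ∀ x y, s(x, y) ∈ Ea → x ∈ S)
    (xa : V) (hxa : xa ∈ S)
    {ab xb : V} (pb : P.Walk ab xb) (hpb : pb.IsPath) (hlb : pb.length = k)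
    (hdisjS : ∀ z, z ∈ S → z ∈ pb.support → False)
    (hedges : P.edgeSet = Ea ∪ {e | e ∈ pb.edges} ∪ {s(xa, xb)})
    (ob : V → V → Bool)
    (hba : ∀ x y, ob x y = true → s(x, y) ∈ pb.edges)
    (hbb : ∀ x y, s(x, y) ∈ pb.edges → (ob x y = true ↔ ob y x = false))
    (hbdeg : ∀ x y y', ob x y = true → ob x y' = true → y = y')
    (rb : V) (hrb : rb ∈ pb.support) (hrbout : ∀ w, ob rb w = false)
    (hd : (k : ℝ) / 2 ≤
      ((SimpleGraph.fromEdgeSet {e | e ∈ pb.edges}).dist rb xb : ℝ))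
    (o : V → V → Bool)
    (ho1 : ∀ x y, o x y = true → P.Adj x y)
    (ho2 : ∀ x y, P.Adj x y → (o x y = true ↔ o y x = false))
    (sk : V) (hsS : sk ∈ S)
    (hsu : ∀ v, (∀ w, o v w = false) → v = sk) :
    (k : ℝ) / 2 ≤
      ((Finset.univ.filter (fun q : V × V =>
        ob q.1 q.2 = true ∧ o q.2 q.1 = true)).card : ℝ) := by
  classical
  have hxbk : pb.getVert k = xb := by rw [← hlb]; exact pb.getVert_length
  -- edges of P
  have hadj' : ∀ x y, P.Adj x y →
      s(x, y) ∈ Ea ∨ s(x, y) ∈ pb.edges ∨ s(x, y) = s(xa, xb) := by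
    intro x y h
    have h2 : s(x, y) ∈ P.edgeSet := h
    rw [hedges] at h2
    rcases h2 with (h2 | h2) | h2
    · exact Or.inl h2
    · exact Or.inr (Or.inl h2)
    · exact Or.inr (Or.inr h2)
  -- every vertex of pb other than rb has an ob-out-neighbour
  have hbexists : ∀ v, v ∈ pb.support → v ≠ rb → ∃ w, ob v w = true := by
    intro v hv hvne
    by_contra hno
    push_neg at hno
    have hcard : (Finset.univ.filter (fun v => ∃ w, ob v w = true)).card = k := by
      rw [orient_card pb.edges.toFinset ob (fun x y h => List.mem_toFinset.2 (hba x y h))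
        (fun x y h => hbb x y (List.mem_toFinset.1 h)) hbdeg,
        List.toFinset_card_of_nodup hpb.isTrail.edges_nodup,
        SimpleGraph.Walk.length_edges, hlb]
    have hsub : (Finset.univ.filter (fun v => ∃ w, ob v w = true)) ⊆
        pb.support.toFinset \ {rb, v} := by
      intro z hz
      rw [Finset.mem_filter] at hz
      obtain ⟨-, w, hw⟩ := hz
      have hzs : z ∈ pb.support := pb.fst_mem_support_of_mem_edges (hba _ _ hw)
      rw [Finset.mem_sdiff, List.mem_toFinset]
      refine ⟨hzs, ?_⟩
      simp only [Finset.mem_insert, Finset.mem_singleton]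
      rintro (rfl | rfl)
      · rw [hrbout w] at hw; exact Bool.noConfusion hw
      · exact hno w hw
    have hle := Finset.card_le_card hsub
    have hpair : ({rb, v} : Finset V) ⊆ pb.support.toFinset := by
      intro z hz
      simp only [Finset.mem_insert, Finset.mem_singleton] at hz
      rcases hz with rfl | rfl
      · exact List.mem_toFinset.2 hrb
      · exact List.mem_toFinset.2 hv
    have hcard2 : (pb.support.toFinset \ ({rb, v} : Finset V)).card =
        pb.support.toFinset.card - 2 := by
      rw [Finset.card_sdiff_of_subset hpair, Finset.card_pair (Ne.symm hvne)]
    have hsupcard : pb.support.toFinset.card = k + 1 := by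
      rw [List.toFinset_card_of_nodup hpb.support_nodup,
        SimpleGraph.Walk.length_support, hlb]
    rw [hcard, hcard2, hsupcard] at hle
    omega
  -- every vertex of pb has an o-out-neighbour
  have hoexists : ∀ v, v ∈ pb.support → ∃ w, o v w = true := by
    intro v hv
    by_contra hno
    push_neg at hno
    have hvs : v = sk := hsu v (fun w => by
      cases h : o v w with
      | false => rfl
      | true => exact absurd h (hno w))
    exact hdisjS sk hsS (hvs ▸ hv)
  -- Part A : o orients pb forward
  have partA : ∀ j, j < k → o (pb.getVert j) (pb.getVert (j + 1)) = true := by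
    intro j
    induction j with
    | zero =>
      intro h0
      obtain ⟨w, hw⟩ := hoexists (pb.getVert 0) (getVert_mem_support pb 0 (by omega))
      rcases hadj' _ _ (ho1 _ _ hw) with hc | hc | hc
      · exact (hdisjS _ (hEa _ _ hc) (getVert_mem_support pb 0 (by omega))).elim
      · obtain ⟨i, hi, hc'⟩ := mem_edges_getVert pb hc
        rcases hc' with ⟨he1, he2⟩ | ⟨he1, he2⟩
        · have hi0 : i = 0 := getVert_inj pb hpb i 0 (by omega) (by omega) he1
          rw [hi0] at he2
          rw [he2]
          exact hw
        · have : i + 1 = 0 := getVert_inj pb hpb (i + 1) 0 (by omega) (by omega) he2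
          omega
      · rw [Sym2.eq_iff] at hc
        rcases hc with ⟨h1, _⟩ | ⟨h1, _⟩
        · exact (hdisjS xa hxa (h1 ▸ getVert_mem_support pb 0 (by omega))).elim
        · have : (0 : ℕ) = k := getVert_inj pb hpb 0 k (by omega) (by omega)
            (by rw [hxbk]; exact h1)
          omega
    | succ n ih =>
      intro hnk
      have prev := ih (by omega)
      obtain ⟨w, hw⟩ := hoexists (pb.getVert (n + 1)) (getVert_mem_support pb (n + 1) (by omega))
      rcases hadj' _ _ (ho1 _ _ hw) with hc | hc | hc
      · exact (hdisjS _ (hEa _ _ hc) (getVert_mem_support pb (n + 1) (by omega))).elim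
      · obtain ⟨i, hi, hc'⟩ := mem_edges_getVert pb hc
        rcases hc' with ⟨he1, he2⟩ | ⟨he1, he2⟩
        · have hieq : i = n + 1 := getVert_inj pb hpb i (n + 1) (by omega) (by omega) he1
          rw [hieq] at he2
          rw [he2]
          exact hw
        · have hieq : i + 1 = n + 1 := getVert_inj pb hpb (i + 1) (n + 1) (by omega) (by omega) he2
          have hin : i = n := by omega
          rw [hin] at he1
          rw [← he1] at hw
          have hfalse := (ho2 _ _ (ho1 _ _ prev)).1 prev
          rw [hfalse] at hw
          exact Bool.noConfusion hw
      · rw [Sym2.eq_iff] at hc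
        rcases hc with ⟨h1, _⟩ | ⟨h1, _⟩
        · exact (hdisjS xa hxa (h1 ▸ getVert_mem_support pb (n + 1) (by omega))).elim
        · have : n + 1 = k := getVert_inj pb hpb (n + 1) k (by omega) (by omega)
            (by rw [hxbk]; exact h1)
          omega
  -- the position of rb along pb, and the distance bound
  have hne : ∀ e ∈ pb.edges, e ∈ (SimpleGraph.fromEdgeSet {e | e ∈ pb.edges}).edgeSet := by
    intro e he
    rw [SimpleGraph.edgeSet_fromEdgeSet]
    exact ⟨he, P.not_isDiag_of_mem_edgeSet (pb.edges_subset_edgeSet he)⟩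
  obtain ⟨m, hmk, hrm, hdist⟩ : ∃ m, m ≤ k ∧ pb.getVert m = rb ∧
      (SimpleGraph.fromEdgeSet {e | e ∈ pb.edges}).dist rb xb ≤ k - m := by
    set q := pb.transfer (SimpleGraph.fromEdgeSet {e | e ∈ pb.edges}) hne with hq
    have hrq : rb ∈ q.support := by
      rw [hq, SimpleGraph.Walk.support_transfer]; exact hrb
    have hlq : q.length = k := by rw [hq, SimpleGraph.Walk.length_transfer]; exact hlb
    refine ⟨(q.takeUntil rb hrq).length, ?_, ?_, ?_⟩
    · have := SimpleGraph.Walk.length_takeUntil_le q hrq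
      omega
    · have h2 := SimpleGraph.Walk.getVert_append (q.takeUntil rb hrq) (q.dropUntil rb hrq)
        ((q.takeUntil rb hrq).length)
      rw [q.take_spec hrq] at h2
      simp only [lt_self_iff_false, if_false, Nat.sub_self,
        SimpleGraph.Walk.getVert_zero] at h2
      exact (getVert_transfer pb (SimpleGraph.fromEdgeSet {e | e ∈ pb.edges}) hne _).symm.trans h2
    · have hlen : (q.takeUntil rb hrq).length + (q.dropUntil rb hrq).length = k := by
        have := congrArg SimpleGraph.Walk.length (q.take_spec hrq)
        rw [SimpleGraph.Walk.length_append] at this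
        omega
      have := SimpleGraph.dist_le (q.dropUntil rb hrq)
      omega
  have hmlt : m < k := by
    by_contra hcon
    have hmeq : m = k := by omega
    have hrx : rb = xb := by rw [← hrm, hmeq, hxbk]
    rw [hrx, SimpleGraph.dist_self] at hd
    have hk1 : (1 : ℝ) ≤ (k : ℝ) := by exact_mod_cast hk
    norm_num at hd
    linarith
  -- Part B : ob orients the segment of pb between rb and xb towards rb
  have partB : ∀ t, t < k - m → ob (pb.getVert (k - t)) (pb.getVert (k - t - 1)) = true := by
    intro t
    induction t with
    | zero =>
      intro _
      simp only [Nat.sub_zero]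
      have hxbne : xb ≠ rb := by
        intro h
        have : k = m := getVert_inj pb hpb k m (by omega) (by omega)
          (by rw [hxbk, hrm]; exact h)
        omega
      obtain ⟨w, hw⟩ := hbexists xb pb.end_mem_support hxbne
      obtain ⟨i, hi, hc⟩ := mem_edges_getVert pb (hba _ _ hw)
      rcases hc with ⟨he1, he2⟩ | ⟨he1, he2⟩
      · have : i = k := getVert_inj pb hpb i k (by omega) (by omega) (by rw [hxbk]; exact he1)
        omega
      · have hik : i + 1 = k := getVert_inj pb hpb (i + 1) k (by omega) (by omega)
          (by rw [hxbk]; exact he2)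
        rw [← hxbk] at hw
        rw [← he1] at hw
        have : i = k - 1 := by omega
        rw [this] at hw
        exact hw
    | succ t iht =>
      intro ht
      have prev := iht (by omega)
      have e1 : k - (t + 1) = k - t - 1 := by omega
      have e2 : k - t - 1 - 1 = k - t - 2 := by omega
      rw [e1, e2]
      have hvne : pb.getVert (k - t - 1) ≠ rb := by
        intro h
        have : k - t - 1 = m := getVert_inj pb hpb (k - t - 1) m (by omega) (by omega)
          (by rw [hrm]; exact h)
        omega
      obtain ⟨w, hw⟩ := hbexists (pb.getVert (k - t - 1))
        (getVert_mem_support pb (k - t - 1) (by omega)) hvne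
      obtain ⟨i, hi, hc⟩ := mem_edges_getVert pb (hba _ _ hw)
      rcases hc with ⟨he1, he2⟩ | ⟨he1, he2⟩
      · exfalso
        have hieq : i = k - t - 1 := getVert_inj pb hpb i (k - t - 1) (by omega) (by omega) he1
        have hi1 : i + 1 = k - t := by omega
        rw [hi1] at he2
        rw [← he2] at hw
        have hfalse := (hbb _ _ (hba _ _ prev)).1 prev
        rw [hfalse] at hw
        exact Bool.noConfusion hw
      · have hieq : i + 1 = k - t - 1 := getVert_inj pb hpb (i + 1) (k - t - 1)
          (by omega) (by omega) he2
        rw [← he1] at hw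
        have : i = k - t - 2 := by omega
        rw [this] at hw
        exact hw
  -- count the differing edges
  have hfin : k - m ≤ (Finset.univ.filter (fun q : V × V =>
      ob q.1 q.2 = true ∧ o q.2 q.1 = true)).card := by
    have hmaps : ∀ t ∈ Finset.range (k - m),
        (pb.getVert (k - t), pb.getVert (k - t - 1)) ∈
          Finset.univ.filter (fun q : V × V => ob q.1 q.2 = true ∧ o q.2 q.1 = true) := by
      intro t ht
      rw [Finset.mem_range] at ht
      rw [Finset.mem_filter]
      refine ⟨Finset.mem_univ _, partB t ht, ?_⟩
      have := partA (k - t - 1) (by omega)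
      rw [show k - t - 1 + 1 = k - t by omega] at this
      exact this
    have hinj : Set.InjOn (fun t => (pb.getVert (k - t), pb.getVert (k - t - 1)))
        (Finset.range (k - m)) := by
      intro t1 h1 t2 h2 heq
      simp only [Finset.coe_range, Set.mem_Iio] at h1 h2
      have := congrArg Prod.fst heq
      simp only at this
      have := getVert_inj pb hpb (k - t1) (k - t2) (by omega) (by omega) this
      omega
    have := Finset.card_le_card_of_injOn _ hmaps hinj
    rw [Finset.card_range] at this
    exact this
  have hcast : ((k - m : ℕ) : ℝ) ≤ ((Finset.univ.filter (fun q : V × V =>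
      ob q.1 q.2 = true ∧ o q.2 q.1 = true)).card : ℝ) := by exact_mod_cast hfin
  refine le_trans (le_trans hd ?_) hcast
  exact_mod_cast hdist

end Stmt15

/-- Let `P` be the path graph obtained from two vertex-disjoint paths `p₁`
(from `a₁` to `x₁`) and `p₂` (from `a₂` to `x₂`), each with exactly `k` edges (`k ≥ 1`), by
adding the edge `x₁x₂`. Let `D_i` (given by `o_i`) be an orientation of `P_i` with all
out-degrees at most `1` whose unique out-degree-`0` vertex `r_i` lies at distance at least `k/2`
from `x_i` along `P_i`. Then every orientation `o` of `P` with all out-degrees at most `1`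
orients at least `k/2` of the edges of `P₁` and `P₂` differently from `D₁` and `D₂` (a
differing edge is counted by the ordered pair giving its `D_i`-direction). -/
theorem stmt_15 {V : Type*} [Fintype V] [DecidableEq V]
    (k : ℕ) (hk : 1 ≤ k)
    (P : SimpleGraph V)
    (a1 x1 a2 x2 : V)
    (p1 : P.Walk a1 x1) (p2 : P.Walk a2 x2)
    (hp1 : p1.IsPath) (hp2 : p2.IsPath)
    (hl1 : p1.length = k) (hl2 : p2.length = k)
    (hdisj : ∀ z, z ∈ p1.support → z ∈ p2.support → False)
    (hall : ∀ z, z ∈ p1.support ∨ z ∈ p2.support)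
    (hx : P.Adj x1 x2)
    (hedges : P.edgeSet = {e | e ∈ p1.edges} ∪ {e | e ∈ p2.edges} ∪ {s(x1, x2)})
    (o1 o2 : V → V → Bool)
    (h1a : ∀ x y, o1 x y = true → s(x, y) ∈ p1.edges)
    (h1b : ∀ x y, s(x, y) ∈ p1.edges → (o1 x y = true ↔ o1 y x = false))
    (h1deg : ∀ x y y', o1 x y = true → o1 x y' = true → y = y')
    (h2a : ∀ x y, o2 x y = true → s(x, y) ∈ p2.edges)
    (h2b : ∀ x y, s(x, y) ∈ p2.edges → (o2 x y = true ↔ o2 y x = false))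
    (h2deg : ∀ x y y', o2 x y = true → o2 x y' = true → y = y')
    (r1 r2 : V)
    (hr1 : r1 ∈ p1.support) (hr2 : r2 ∈ p2.support)
    (hr1out : ∀ w, o1 r1 w = false) (hr2out : ∀ w, o2 r2 w = false)
    (hd1 : (k : ℝ) / 2 ≤
      ((SimpleGraph.fromEdgeSet {e | e ∈ p1.edges}).dist r1 x1 : ℝ))
    (hd2 : (k : ℝ) / 2 ≤
      ((SimpleGraph.fromEdgeSet {e | e ∈ p2.edges}).dist r2 x2 : ℝ)) :
    ∀ o : V → V → Bool,
      (∀ x y, o x y = true → P.Adj x y) →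
      (∀ x y, P.Adj x y → (o x y = true ↔ o y x = false)) →
      (∀ x y y', o x y = true → o x y' = true → y = y') →
      (k : ℝ) / 2 ≤
        ((Finset.univ.filter (fun q : V × V =>
          (o1 q.1 q.2 = true ∨ o2 q.1 q.2 = true) ∧ o q.2 q.1 = true)).card : ℝ) := by
  intro o ho1 ho2 ho3
  classical
  -- the edge set of P as a Finset
  set E' : Finset (Sym2 V) := (p1.edges.toFinset ∪ p2.edges.toFinset) ∪ {s(x1, x2)} with hE'
  have hmemE' : ∀ e, e ∈ E' ↔ e ∈ P.edgeSet := by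
    intro e
    rw [hedges, hE']
    simp only [Finset.mem_union, Finset.mem_singleton, List.mem_toFinset,
      Set.mem_union, Set.mem_setOf_eq, Set.mem_singleton_iff]
  -- |V| = 2k + 2
  have hVcard : Fintype.card V = 2 * k + 2 := by
    have huniv : (Finset.univ : Finset V) = p1.support.toFinset ∪ p2.support.toFinset := by
      ext z
      simpa using hall z
    have hdis : Disjoint p1.support.toFinset p2.support.toFinset :=
      Finset.disjoint_left.2 fun z hz1 hz2 =>
        hdisj z (List.mem_toFinset.1 hz1) (List.mem_toFinset.1 hz2)
    rw [← Finset.card_univ, huniv, Finset.card_union_of_disjoint hdis,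
      List.toFinset_card_of_nodup hp1.support_nodup,
      List.toFinset_card_of_nodup hp2.support_nodup,
      SimpleGraph.Walk.length_support, SimpleGraph.Walk.length_support, hl1, hl2]
    ring
  -- |E'| = 2k + 1
  have hedisj : ∀ e, e ∈ p1.edges → e ∈ p2.edges → False := by
    intro e h1 h2
    induction e using Sym2.inductionOn with
    | hf x y =>
      exact hdisj x (p1.fst_mem_support_of_mem_edges h1) (p2.fst_mem_support_of_mem_edges h2)
  have hbr1 : s(x1, x2) ∉ p1.edges := fun h =>
    hdisj x2 (p1.snd_mem_support_of_mem_edges h) p2.end_mem_support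
  have hbr2 : s(x1, x2) ∉ p2.edges := fun h =>
    hdisj x1 p1.end_mem_support (p2.fst_mem_support_of_mem_edges h)
  have hEcard : E'.card = 2 * k + 1 := by
    rw [hE']
    rw [Finset.card_union_of_disjoint (by
      simp only [Finset.disjoint_singleton_right, Finset.mem_union, List.mem_toFinset]
      rintro (h | h)
      · exact hbr1 h
      · exact hbr2 h)]
    rw [Finset.card_union_of_disjoint (Finset.disjoint_left.2 fun e he1 he2 =>
      hedisj e (List.mem_toFinset.1 he1) (List.mem_toFinset.1 he2))]
    rw [List.toFinset_card_of_nodup hp1.isTrail.edges_nodup,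
      List.toFinset_card_of_nodup hp2.isTrail.edges_nodup,
      SimpleGraph.Walk.length_edges, SimpleGraph.Walk.length_edges, hl1, hl2,
      Finset.card_singleton]
    ring
  -- o has a unique sink
  have hT : (Finset.univ.filter (fun v => ∃ w, o v w = true)).card = 2 * k + 1 := by
    rw [Stmt15.orient_card E' o
      (fun x y h => (hmemE' _).2 ((SimpleGraph.mem_edgeSet P).2 (ho1 x y h)))
      (fun x y h => ho2 x y ((SimpleGraph.mem_edgeSet P).1 ((hmemE' _).1 h))) ho3]
    exact hEcard
  have hTc : (Finset.univ \ (Finset.univ.filter (fun v => ∃ w, o v w = true))).card = 1 := by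
    rw [Finset.card_sdiff_of_subset (Finset.filter_subset _ _), Finset.card_univ, hVcard, hT]
    omega
  obtain ⟨sk, hsk⟩ := Finset.card_eq_one.1 hTc
  have hsu : ∀ v, (∀ w, o v w = false) → v = sk := by
    intro v hv
    have hvmem : v ∈ Finset.univ \ (Finset.univ.filter (fun v => ∃ w, o v w = true)) := by
      rw [Finset.mem_sdiff, Finset.mem_filter]
      refine ⟨Finset.mem_univ _, ?_⟩
      rintro ⟨-, w, hw⟩
      rw [hv w] at hw
      exact Bool.noConfusion hw
    rw [hsk] at hvmem
    exact Finset.mem_singleton.1 hvmem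
  have hskmem : sk ∈ Finset.univ \ (Finset.univ.filter (fun v => ∃ w, o v w = true)) := by
    rw [hsk]; exact Finset.mem_singleton_self sk
  rcases hall sk with hc | hc
  · -- the sink of o lies on p1 : at least k/2 of p2's edges differ
    have key := Stmt15.aux (V := V) k hk P {z | z ∈ p1.support} {e | e ∈ p1.edges}
      (fun x y h => p1.fst_mem_support_of_mem_edges h) x1 p1.end_mem_support
      p2 hp2 hl2 (fun z hz1 hz2 => hdisj z hz1 hz2) hedges
      o2 h2a h2b h2deg r2 hr2 hr2out hd2 o ho1 ho2 sk hc hsu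
    refine le_trans key ?_
    have hsub : (Finset.univ.filter (fun q : V × V =>
        o2 q.1 q.2 = true ∧ o q.2 q.1 = true)) ⊆
        (Finset.univ.filter (fun q : V × V =>
          (o1 q.1 q.2 = true ∨ o2 q.1 q.2 = true) ∧ o q.2 q.1 = true)) := by
      intro q hq
      rw [Finset.mem_filter] at hq ⊢
      exact ⟨hq.1, Or.inr hq.2.1, hq.2.2⟩
    exact_mod_cast Finset.card_le_card hsub
  · -- the sink of o lies on p2 : at least k/2 of p1's edges differ
    have hedges' : P.edgeSet = {e | e ∈ p2.edges} ∪ {e | e ∈ p1.edges} ∪ {s(x2, x1)} := by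
      rw [hedges, show s(x2, x1) = s(x1, x2) from Sym2.eq_swap]
      ext e
      simp only [Set.mem_union, Set.mem_setOf_eq, Set.mem_singleton_iff]
      tauto
    have key := Stmt15.aux (V := V) k hk P {z | z ∈ p2.support} {e | e ∈ p2.edges}
      (fun x y h => p2.fst_mem_support_of_mem_edges h) x2 p2.end_mem_support
      p1 hp1 hl1 (fun z hz1 hz2 => hdisj z hz2 hz1) hedges'
      o1 h1a h1b h1deg r1 hr1 hr1out hd1 o ho1 ho2 sk hc hsu
    refine le_trans key ?_
    have hsub : (Finset.univ.filter (fun q : V × V =>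
        o1 q.1 q.2 = true ∧ o q.2 q.1 = true)) ⊆
        (Finset.univ.filter (fun q : V × V =>
          (o1 q.1 q.2 = true ∨ o2 q.1 q.2 = true) ∧ o q.2 q.1 = true)) := by
      intro q hq
      rw [Finset.mem_filter] at hq ⊢
      exact ⟨hq.1, Or.inl hq.2.1, hq.2.2⟩
    exact_mod_cast Finset.card_le_card hsub
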